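/- Let S_1, S_2, S_3 be Borel subsets of Polish spaces and P a stochastic kernel on S_1 × S_2 given S_3 whose disintegration is P(B × C | s_3) = ∫_C H(B | s_2, s_3) P'(ds_2 | s_3), where P'(C|s_3) = P(S_1 × C|s_3). Suppose the topology on S_1 has a countable base τ_b containing S_1 such that for each finite intersection O of base elements, the family {s_3 ↦ P(O × C | s_3) : C open in S_2} is equicontinuous at a point s_3 ∈ S_3. Then for any sequence s_3^(n) → s_3 there exist a subsequence {n_k} and a set C* ∈ B(S_2) with P'(C* | s_3) = 1 such that H(· | s_2, s_3^(n_k)) converges weakly to H(· | s_2, s_3) for all s_2 ∈ C* as k → ∞. -/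

import Mathlib

open MeasureTheory Filter Topology BoundedContinuousFunction
open scoped ENNReal NNReal

section Aux

lemma cmp_lemma {α : Type*} [MeasurableSpace α] (μ ν : Measure α)
    [IsFiniteMeasure μ] [IsFiniteMeasure ν] (f : α → ℝ) (hf : Measurable f)
    (h0 : ∀ x, 0 ≤ f x) (h1 : ∀ x, f x ≤ 1) (δ : ℝ)
    (hδ : ∀ A : Set α, MeasurableSet A → (μ A).toReal ≤ (ν A).toReal + δ) :
    ∫ x, f x ∂μ ≤ ∫ x, f x ∂ν + δ := by
  have hδ0 : 0 ≤ δ := by simpa using hδ ∅ MeasurableSet.empty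
  have key : ∀ (ρ : Measure α), ∫⁻ t in Set.Ioi (0:ℝ), ρ {a | t < f a}
      = ∫⁻ t in Set.Ioc (0:ℝ) 1, ρ {a | t < f a} := by
    intro ρ
    rw [← Set.Ioc_union_Ioi_eq_Ioi (by norm_num : (0:ℝ) ≤ 1),
      lintegral_union measurableSet_Ioi (by
        rw [Set.disjoint_left]; rintro t ⟨_, ht⟩ ht'; simp only [Set.mem_Ioi] at ht'; linarith)]
    have h2 : ∫⁻ t in Set.Ioi (1:ℝ), ρ {a | t < f a} = ∫⁻ _ in Set.Ioi (1:ℝ), (0:ℝ≥0∞) := by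
      refine setLIntegral_congr_fun measurableSet_Ioi ?_
      intro t ht
      have : {a | t < f a} = (∅ : Set α) := by
        ext a; simp only [Set.mem_setOf_eq, Set.mem_empty_iff_false, iff_false, not_lt]
        exact (h1 a).trans (le_of_lt ht)
      show ρ {a | t < f a} = 0
      rw [this, measure_empty]
    rw [h2]; simp
  have lc : ∀ (ρ : Measure α), ∫⁻ x, ENNReal.ofReal (f x) ∂ρ
      = ∫⁻ t in Set.Ioc (0:ℝ) 1, ρ {a | t < f a} := by
    intro ρ
    rw [lintegral_eq_lintegral_meas_lt ρ (Filter.Eventually.of_forall h0) hf.aemeasurable]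
    exact key ρ
  have bd : ∫⁻ t in Set.Ioc (0:ℝ) 1, μ {a | t < f a}
      ≤ (∫⁻ t in Set.Ioc (0:ℝ) 1, ν {a | t < f a}) + ENNReal.ofReal δ := by
    have : ∫⁻ t in Set.Ioc (0:ℝ) 1, μ {a | t < f a}
        ≤ ∫⁻ t in Set.Ioc (0:ℝ) 1, (ν {a | t < f a} + ENNReal.ofReal δ) := by
      refine lintegral_mono fun t => ?_
      have hA : MeasurableSet {a | t < f a} := measurableSet_lt measurable_const hf
      have := hδ _ hA
      have hμ : μ {a | t < f a} = ENNReal.ofReal (μ {a | t < f a}).toReal :=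
        (ENNReal.ofReal_toReal (measure_ne_top _ _)).symm
      rw [hμ]
      calc ENNReal.ofReal (μ {a | t < f a}).toReal
          ≤ ENNReal.ofReal ((ν {a | t < f a}).toReal + δ) := ENNReal.ofReal_le_ofReal this
        _ ≤ ENNReal.ofReal (ν {a | t < f a}).toReal + ENNReal.ofReal δ :=
            ENNReal.ofReal_add_le
        _ = ν {a | t < f a} + ENNReal.ofReal δ := by
            rw [ENNReal.ofReal_toReal (measure_ne_top _ _)]
    refine this.trans ?_
    rw [lintegral_add_right _ measurable_const, setLIntegral_const]
    have : (volume (Set.Ioc (0:ℝ) 1)) = 1 := by simp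
    rw [this, mul_one]
  have int_eq : ∀ (ρ : Measure α), ∫ x, f x ∂ρ = (∫⁻ x, ENNReal.ofReal (f x) ∂ρ).toReal := by
    intro ρ
    rw [integral_eq_lintegral_of_nonneg_ae (Filter.Eventually.of_forall h0)
      hf.aestronglyMeasurable]
  have fin : ∀ (ρ : Measure α) [IsFiniteMeasure ρ], ∫⁻ x, ENNReal.ofReal (f x) ∂ρ ≠ ⊤ := by
    intro ρ _
    refine ne_top_of_le_ne_top (measure_ne_top ρ Set.univ) ?_
    calc ∫⁻ x, ENNReal.ofReal (f x) ∂ρ ≤ ∫⁻ _, 1 ∂ρ := by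
          refine lintegral_mono fun x => ?_
          simpa using ENNReal.ofReal_le_ofReal (h1 x)
      _ = ρ Set.univ := by simp
  rw [int_eq μ, int_eq ν]
  have : (∫⁻ x, ENNReal.ofReal (f x) ∂μ) ≤ (∫⁻ x, ENNReal.ofReal (f x) ∂ν) + ENNReal.ofReal δ := by
    rw [lc μ, lc ν]; exact bd
  calc (∫⁻ x, ENNReal.ofReal (f x) ∂μ).toReal
      ≤ ((∫⁻ x, ENNReal.ofReal (f x) ∂ν) + ENNReal.ofReal δ).toReal := by
        refine ENNReal.toReal_mono ?_ this
        exact ENNReal.add_ne_top.mpr ⟨fin ν, ENNReal.ofReal_ne_top⟩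
    _ = (∫⁻ x, ENNReal.ofReal (f x) ∂ν).toReal + δ := by
        rw [ENNReal.toReal_add (fin ν) ENNReal.ofReal_ne_top, ENNReal.toReal_ofReal hδ0]

lemma ae_tendsto_of_summable_integral {α : Type*} [MeasurableSpace α] (μ : Measure α)
    (g : ℕ → α → ℝ) (hg : ∀ k, Measurable (g k)) (hnn : ∀ k x, 0 ≤ g k x)
    (hint : ∀ k, Integrable (g k) μ)
    (hsum : Summable (fun k => ∫ x, g k x ∂μ)) :
    ∀ᵐ x ∂μ, Tendsto (fun k => g k x) atTop (𝓝 0) := by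
  have h1 : ∫⁻ x, ∑' k, ENNReal.ofReal (g k x) ∂μ = ∑' k, ∫⁻ x, ENNReal.ofReal (g k x) ∂μ :=
    lintegral_tsum (fun k => ((hg k).ennreal_ofReal).aemeasurable)
  have h2 : ∀ k, ∫⁻ x, ENNReal.ofReal (g k x) ∂μ = ENNReal.ofReal (∫ x, g k x ∂μ) := by
    intro k
    rw [← ofReal_integral_eq_lintegral_ofReal (hint k) (Filter.Eventually.of_forall (hnn k))]
  have h3 : ∑' k, ∫⁻ x, ENNReal.ofReal (g k x) ∂μ ≠ ∞ := by
    simp_rw [h2]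
    rw [← ENNReal.ofReal_tsum_of_nonneg (fun k => integral_nonneg (hnn k)) hsum]
    exact ENNReal.ofReal_ne_top
  have h4 : ∀ᵐ x ∂μ, ∑' k, ENNReal.ofReal (g k x) < ∞ := by
    refine ae_lt_top ?_ (h1 ▸ h3)
    exact Measurable.ennreal_tsum (fun k => (hg k).ennreal_ofReal)
  filter_upwards [h4] with x hx
  have hs : Summable (fun k => g k x) := by
    have := ENNReal.summable_toReal hx.ne
    simpa [ENNReal.toReal_ofReal (hnn _ x)] using this
  exact hs.tendsto_atTop_zero

lemma tendsto_toReal_measure_biUnion_list {α : Type*} [MeasurableSpace α]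
    (μ : Measure α) (μk : ℕ → Measure α) [IsFiniteMeasure μ] [∀ k, IsFiniteMeasure (μk k)]
    (I : Finset ℕ → Set α) (hmeas : ∀ s, MeasurableSet (I s))
    (hinter : ∀ s t, I s ∩ I t = I (s ∪ t))
    (hconv : ∀ s, Tendsto (fun k => (μk k (I s)).toReal) atTop (𝓝 (μ (I s)).toReal)) :
    ∀ (L : List (Finset ℕ)),
      Tendsto (fun k => (μk k (⋃ s ∈ L, I s)).toReal) atTop (𝓝 (μ (⋃ s ∈ L, I s)).toReal) := by
  have hre : ∀ (ρ : Measure α) [IsFiniteMeasure ρ] (A B : Set α), MeasurableSet B →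
      (ρ (A ∪ B)).toReal = (ρ A).toReal + (ρ B).toReal - (ρ (A ∩ B)).toReal := by
    intro ρ _ A B hB
    have h := measure_union_add_inter (μ := ρ) A hB
    have := congrArg ENNReal.toReal h
    rw [ENNReal.toReal_add (measure_ne_top _ _) (measure_ne_top _ _),
      ENNReal.toReal_add (measure_ne_top _ _) (measure_ne_top _ _)] at this
    linarith
  have hUmeas : ∀ (L : List (Finset ℕ)), MeasurableSet (⋃ s ∈ L, I s) := by
    intro L
    exact MeasurableSet.biUnion (Set.Finite.countable L.finite_toSet) (fun s _ => hmeas s)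
  suffices h : ∀ (n : ℕ) (L : List (Finset ℕ)), L.length ≤ n →
      Tendsto (fun k => (μk k (⋃ s ∈ L, I s)).toReal) atTop (𝓝 (μ (⋃ s ∈ L, I s)).toReal) by
    intro L; exact h L.length L le_rfl
  intro n
  induction n with
  | zero =>
    intro L hL
    rw [List.length_eq_zero_iff.mp (Nat.le_zero.mp hL)]
    simp only [List.not_mem_nil, Set.iUnion_of_empty, Set.iUnion_empty, measure_empty,
      ENNReal.toReal_zero]
    exact tendsto_const_nhds
  | succ n ih =>
    intro L hL
    match L with
    | [] =>
      simp only [List.not_mem_nil, Set.iUnion_of_empty, Set.iUnion_empty, measure_empty,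
        ENNReal.toReal_zero]
      exact tendsto_const_nhds
    | s :: T =>
      have hT : T.length ≤ n := by simpa using hL
      have hsplit : (⋃ x ∈ (s :: T), I x) = I s ∪ ⋃ x ∈ T, I x := by
        ext y; simp [List.mem_cons, or_and_right, Set.mem_iUnion, exists_or]
      have hintersplit : I s ∩ (⋃ x ∈ T, I x) = ⋃ x ∈ (T.map (fun t => s ∪ t)), I x := by
        rw [Set.inter_iUnion₂]
        ext y
        simp only [Set.mem_iUnion, exists_prop, List.mem_map]
        constructor
        · rintro ⟨t, ht, hy⟩
          exact ⟨s ∪ t, ⟨t, ht, rfl⟩, by rw [← hinter s t]; exact hy⟩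
        · rintro ⟨u, ⟨t, ht, rfl⟩, hy⟩
          exact ⟨t, ht, by rw [hinter s t]; exact hy⟩
      have hmaplen : (T.map (fun t => s ∪ t)).length ≤ n := by simpa using hT
      have h1 := hconv s
      have h2 := ih T hT
      have h3 := ih _ hmaplen
      rw [← hintersplit] at h3
      have key : Tendsto (fun k => (μk k (I s)).toReal + (μk k (⋃ x ∈ T, I x)).toReal
          - (μk k (I s ∩ ⋃ x ∈ T, I x)).toReal) atTop
          (𝓝 ((μ (I s)).toReal + (μ (⋃ x ∈ T, I x)).toReal
            - (μ (I s ∩ ⋃ x ∈ T, I x)).toReal)) := (h1.add h2).sub h3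
      rw [hsplit]
      have heq : ∀ (ρ : Measure α) [IsFiniteMeasure ρ],
          (ρ (I s ∪ ⋃ x ∈ T, I x)).toReal = (ρ (I s)).toReal + (ρ (⋃ x ∈ T, I x)).toReal
            - (ρ (I s ∩ ⋃ x ∈ T, I x)).toReal := fun ρ _ => hre ρ _ _ (hUmeas T)
      rw [heq μ]
      exact key.congr (fun k => (heq (μk k)).symm)

lemma weak_conv_of_basis {S1 : Type*} [MetricSpace S1] [MeasurableSpace S1] [BorelSpace S1]
    (μ : Measure S1) (μk : ℕ → Measure S1) (hμp : IsProbabilityMeasure μ)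
    (hμkp : ∀ k, IsProbabilityMeasure (μk k))
    (e : ℕ → Set S1) (he : ∀ j, IsOpen (e j))
    (hbasis : ∀ G : Set S1, IsOpen G → ∀ x ∈ G, ∃ j, x ∈ e j ∧ e j ⊆ G)
    (hconv : ∀ s : Finset ℕ, Tendsto (fun k => (μk k (⋂ j ∈ s, e j)).toReal) atTop
      (𝓝 (μ (⋂ j ∈ s, e j)).toReal)) :
    ∀ f : S1 →ᵇ ℝ, Tendsto (fun k => ∫ x, f x ∂(μk k)) atTop (𝓝 (∫ x, f x ∂μ)) := by
  classical
  haveI := hμp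
  haveI := hμkp
  set I : Finset ℕ → Set S1 := fun s => ⋂ j ∈ s, e j with hI
  have hmeas : ∀ s, MeasurableSet (I s) := fun s =>
    Finset.measurableSet_biInter s (fun j _ => (he j).measurableSet)
  have hinter : ∀ s t, I s ∩ I t = I (s ∪ t) := by
    intro s t; ext y
    simp only [hI, Set.mem_inter_iff, Set.mem_iInter, Finset.mem_union]
    constructor
    · rintro ⟨h1, h2⟩ j hj; cases hj with | inl h => exact h1 j h | inr h => exact h2 j h
    · intro h; exact ⟨fun j hj => h j (Or.inl hj), fun j hj => h j (Or.inr hj)⟩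
  have hlist := tendsto_toReal_measure_biUnion_list μ μk I hmeas hinter hconv
  have hopen : ∀ G : Set S1, IsOpen G → μ G ≤ atTop.liminf (fun k => μk k G) := by
    intro G hG
    set W : ℕ → Set S1 := fun m => ⋃ j ∈ (Finset.range (m+1)).filter (fun j => e j ⊆ G), e j
      with hW
    have hWG : ∀ m, W m ⊆ G := by
      intro m y hy
      simp only [hW, Set.mem_iUnion, Finset.mem_filter] at hy
      obtain ⟨j, ⟨_, hj⟩, hyj⟩ := hy
      exact hj hyj
    have hWmono : Monotone W := by
      intro a b hab y hy
      simp only [hW, Set.mem_iUnion, Finset.mem_filter, Finset.mem_range] at hy ⊢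
      obtain ⟨j, ⟨hj1, hj2⟩, hyj⟩ := hy
      exact ⟨j, ⟨by omega, hj2⟩, hyj⟩
    have hWunion : (⋃ m, W m) = G := by
      apply Set.Subset.antisymm
      · exact Set.iUnion_subset hWG
      · intro x hx
        obtain ⟨j, hxj, hjG⟩ := hbasis G hG x hx
        refine Set.mem_iUnion.mpr ⟨j, ?_⟩
        simp only [hW, Set.mem_iUnion]
        exact ⟨j, Finset.mem_filter.mpr ⟨Finset.mem_range.mpr (by omega), hjG⟩, hxj⟩
    have hWconv : ∀ m, Tendsto (fun k => μk k (W m)) atTop (𝓝 (μ (W m))) := by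
      intro m
      set L : List (Finset ℕ) :=
        (((Finset.range (m+1)).filter (fun j => e j ⊆ G)).toList).map (fun j => {j}) with hL
      have hWL : W m = ⋃ s ∈ L, I s := by
        ext y
        simp only [hW, hL, Set.mem_iUnion, List.mem_map, Finset.mem_toList, exists_prop]
        constructor
        · rintro ⟨j, hj, hy⟩
          exact ⟨{j}, ⟨j, hj, rfl⟩, by simp [hI, hy]⟩
        · rintro ⟨s, ⟨j, hj, rfl⟩, hy⟩
          simp only [hI, Set.mem_iInter, Finset.mem_singleton] at hy
          exact ⟨j, hj, hy j rfl⟩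
      have htr := hlist L
      rw [← hWL] at htr
      have h1 : Tendsto (fun k => ENNReal.ofReal ((μk k (W m)).toReal)) atTop
          (𝓝 (ENNReal.ofReal ((μ (W m)).toReal))) :=
        (ENNReal.continuous_ofReal.tendsto _).comp htr
      have h2 : ∀ k, ENNReal.ofReal ((μk k (W m)).toReal) = μk k (W m) := fun k =>
        ENNReal.ofReal_toReal (measure_ne_top _ _)
      have h3 : ENNReal.ofReal ((μ (W m)).toReal) = μ (W m) :=
        ENNReal.ofReal_toReal (measure_ne_top _ _)
      rw [h3] at h1
      exact h1.congr h2
    have hμG : Tendsto (fun m => μ (W m)) atTop (𝓝 (μ G)) := by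
      rw [← hWunion]
      exact tendsto_measure_iUnion_atTop hWmono
    refine le_of_tendsto hμG (Filter.Eventually.of_forall (fun m => ?_))
    have : atTop.liminf (fun k => μk k (W m)) = μ (W m) := (hWconv m).liminf_eq
    rw [← this]
    exact Filter.liminf_le_liminf (Filter.Eventually.of_forall
      (fun k => measure_mono (hWG m)))
  let pm : ProbabilityMeasure S1 := ⟨μ, inferInstance⟩
  let pmk : ℕ → ProbabilityMeasure S1 := fun k => ⟨μk k, hμkp k⟩
  have htends : atTop.Tendsto (fun k => pmk k) (𝓝 pm) := by
    apply MeasureTheory.tendsto_of_forall_isOpen_le_liminf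
    intro G hG
    have h := hopen G hG
    have aux : ENNReal.ofNNReal (atTop.liminf (fun i => pmk i G)) =
        atTop.liminf (ENNReal.ofNNReal ∘ fun i => pmk i G) := by
      refine Monotone.map_liminf_of_continuousAt (F := atTop) ENNReal.coe_mono
        (fun i => pmk i G) ENNReal.continuous_coe.continuousAt ?_ ?_
      · exact IsBoundedUnder.isCoboundedUnder_ge ⟨1, by simp⟩
      · exact ⟨0, by simp⟩
    rw [← ENNReal.coe_le_coe, aux]
    have h1 : ∀ i, (ENNReal.ofNNReal ∘ fun i => pmk i G) i = μk i G := by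
      intro i
      exact ProbabilityMeasure.ennreal_coeFn_eq_coeFn_toMeasure (pmk i) G
    have h2 : (ENNReal.ofNNReal (pm G)) = μ G :=
      ProbabilityMeasure.ennreal_coeFn_eq_coeFn_toMeasure pm G
    rw [h2, liminf_congr (Filter.Eventually.of_forall h1)]
    exact h
  intro f
  exact ProbabilityMeasure.tendsto_iff_forall_integral_tendsto.mp htends f

end Aux

theorem stmt16 {S1 S2 S3 : Type*}
    [MetricSpace S1] [SecondCountableTopology S1] [MeasurableSpace S1] [BorelSpace S1]
    [MetricSpace S2] [SecondCountableTopology S2] [MeasurableSpace S2] [BorelSpace S2]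
    [MetricSpace S3] [SecondCountableTopology S3] [MeasurableSpace S3] [BorelSpace S3]
    (P : S3 → Measure (S1 × S2)) (hPm : Measurable P)
    (hPprob : ∀ s, IsProbabilityMeasure (P s))
    (H : S2 → S3 → Measure S1) (hHm : Measurable (Function.uncurry H))
    (hHprob : ∀ s2 s3, IsProbabilityMeasure (H s2 s3))
    (hdis : ∀ (s3 : S3) (B : Set S1) (C : Set S2), MeasurableSet B → MeasurableSet C →
      P s3 (B ×ˢ C) = ∫⁻ s2 in C, H s2 s3 B ∂((P s3).map Prod.snd))
    (τb : Set (Set S1)) (hc : τb.Countable)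
    (hb : TopologicalSpace.IsTopologicalBasis τb) (huniv : Set.univ ∈ τb)
    (s3 : S3)
    (heq : ∀ (N : ℕ) (O : Fin (N + 1) → Set S1), (∀ j, O j ∈ τb) →
      Tendsto (fun t => ⨆ (C : Set S2) (_ : IsOpen C),
        |(P t ((⋂ j, O j) ×ˢ C)).toReal - (P s3 ((⋂ j, O j) ×ˢ C)).toReal|)
        (𝓝 s3) (𝓝 0)) :
    ∀ s3n : ℕ → S3, Tendsto s3n atTop (𝓝 s3) →
      ∃ φ : ℕ → ℕ, StrictMono φ ∧ ∃ Cs : Set S2, MeasurableSet Cs ∧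
        ((P s3).map Prod.snd) Cs = 1 ∧
        ∀ s2 ∈ Cs, ∀ f : S1 →ᵇ ℝ,
          Tendsto (fun k => ∫ x, f x ∂(H s2 (s3n (φ k)))) atTop
            (𝓝 (∫ x, f x ∂(H s2 s3))) := by
  intro s3n hs3n
  classical
  haveI := hPprob s3
  haveI : ∀ n, IsProbabilityMeasure (P (s3n n)) := fun n => hPprob _
  -- enumerate the basis
  obtain ⟨e, he_range⟩ := hc.exists_eq_range ⟨Set.univ, huniv⟩
  have he_mem : ∀ j, e j ∈ τb := fun j => he_range ▸ Set.mem_range_self j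
  have he_open : ∀ j, IsOpen (e j) := fun j => hb.isOpen (he_mem j)
  set I : Finset ℕ → Set S1 := fun s => ⋂ j ∈ s, e j with hIdef
  have hImeas : ∀ s, MeasurableSet (I s) :=
    fun s => Finset.measurableSet_biInter s (fun j _ => (he_open j).measurableSet)
  have hIuniv : I ∅ = Set.univ := by simp [hIdef]
  -- marginals
  set P' : Measure S2 := (P s3).map Prod.snd with hP'def
  set Pn' : ℕ → Measure S2 := fun n => (P (s3n n)).map Prod.snd with hPn'def
  haveI : IsProbabilityMeasure P' := Measure.isProbabilityMeasure_map measurable_snd.aemeasurable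
  haveI : ∀ n, IsProbabilityMeasure (Pn' n) :=
    fun n => Measure.isProbabilityMeasure_map measurable_snd.aemeasurable
  have hmap : ∀ (t : S3) (A : Set S2), MeasurableSet A →
      (P t).map Prod.snd A = P t (Set.univ ×ˢ A) := by
    intro t A hA
    rw [Measure.map_apply measurable_snd hA, Set.univ_prod]
  -- the uniform deviations
  set D : ℕ → Finset ℕ → ℝ := fun n s => ⨆ (C : Set S2) (_ : IsOpen C),
    |(P (s3n n) (I s ×ˢ C)).toReal - (P s3 (I s ×ˢ C)).toReal| with hDdef
  -- convergence of D
  have hD : ∀ s, Tendsto (fun n => D n s) atTop (𝓝 0) := by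
    intro s
    set L : List ℕ := s.toList with hLdef
    set O : Fin (L.length + 1) → Set S1 := fun j =>
      if h : (j : ℕ) < L.length then e (L.get ⟨j, h⟩) else Set.univ with hOdef
    have hO : ∀ j, O j ∈ τb := by
      intro j
      by_cases h : (j : ℕ) < L.length
      · simp only [hOdef, dif_pos h]; exact he_mem _
      · simp only [hOdef, dif_neg h]; exact huniv
    have hOint : (⋂ j, O j) = I s := by
      ext x
      simp only [Set.mem_iInter, hIdef]
      constructor
      · intro hx a ha
        have haL : a ∈ L := by rw [hLdef]; exact Finset.mem_toList.mpr ha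
        obtain ⟨i, hi, rfl⟩ := List.mem_iff_get.mp haL
        have := hx ⟨(i : ℕ), by omega⟩
        simp only [hOdef] at this
        rw [dif_pos (by simpa using i.isLt)] at this
        convert this using 3
      · intro hx j
        simp only [hOdef]
        by_cases h : (j : ℕ) < L.length
        · rw [dif_pos h]
          refine hx _ ?_
          rw [← Finset.mem_toList, ← hLdef]
          exact L.get_mem _
        · rw [dif_neg h]; exact Set.mem_univ x
    have h := heq L.length O hO
    rw [show (⋂ j, O j) = I s from hOint] at h
    have := h.comp hs3n
    simpa [hDdef, Function.comp_def] using this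
  -- basic bounds
  have hPto : ∀ (t : S3) (E : Set (S1 × S2)), (P t E).toReal ≤ 1 := by
    intro t E
    haveI := hPprob t
    have := ENNReal.toReal_mono ENNReal.one_ne_top (prob_le_one (μ := P t) (s := E))
    simpa using this
  have hg_le : ∀ n s (C : Set S2),
      |(P (s3n n) (I s ×ˢ C)).toReal - (P s3 (I s ×ˢ C)).toReal| ≤ 2 := by
    intro n s C
    have h1 := hPto (s3n n) (I s ×ˢ C)
    have h2 := hPto s3 (I s ×ˢ C)
    have h3 : (0:ℝ) ≤ (P (s3n n) (I s ×ˢ C)).toReal := ENNReal.toReal_nonneg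
    have h4 : (0:ℝ) ≤ (P s3 (I s ×ˢ C)).toReal := ENNReal.toReal_nonneg
    rw [abs_le]; constructor <;> linarith
  have hbdd : ∀ n s, BddAbove (Set.range fun C : Set S2 => ⨆ _ : IsOpen C,
      |(P (s3n n) (I s ×ˢ C)).toReal - (P s3 (I s ×ˢ C)).toReal|) := by
    intro n s
    refine ⟨2, ?_⟩
    rintro x ⟨C, rfl⟩
    exact Real.iSup_le (fun _ => hg_le n s C) (by norm_num)
  have hDopen : ∀ n s (C : Set S2), IsOpen C →
      |(P (s3n n) (I s ×ˢ C)).toReal - (P s3 (I s ×ˢ C)).toReal| ≤ D n s := by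
    intro n s C hC
    calc |(P (s3n n) (I s ×ˢ C)).toReal - (P s3 (I s ×ˢ C)).toReal|
        = ⨆ _ : IsOpen C, |(P (s3n n) (I s ×ˢ C)).toReal - (P s3 (I s ×ˢ C)).toReal| :=
          (ciSup_pos (p := IsOpen C) (f := fun _ =>
            |(P (s3n n) (I s ×ˢ C)).toReal - (P s3 (I s ×ˢ C)).toReal|) hC).symm
      _ ≤ D n s := le_ciSup (hbdd n s) C
  -- from open to measurable sets, via outer regularity
  have hDle : ∀ n s (C : Set S2), MeasurableSet C →
      |(P (s3n n) (I s ×ˢ C)).toReal - (P s3 (I s ×ˢ C)).toReal| ≤ D n s := by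
    intro n s C hC
    refine le_of_forall_pos_le_add (fun ε hε => ?_)
    set ν : Measure S2 := (P (s3n n)).map Prod.snd + (P s3).map Prod.snd with hνdef
    haveI : IsProbabilityMeasure ((P (s3n n)).map Prod.snd) :=
      Measure.isProbabilityMeasure_map measurable_snd.aemeasurable
    haveI : IsProbabilityMeasure ((P s3).map Prod.snd) :=
      Measure.isProbabilityMeasure_map measurable_snd.aemeasurable
    haveI : IsFiniteMeasure ν := by rw [hνdef]; infer_instance
    obtain ⟨U, hCU, hUopen, hνU⟩ := Set.exists_isOpen_lt_add C (μ := ν)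
      (measure_ne_top ν C) (ε := ENNReal.ofReal (ε/2))
      (by simp [ENNReal.ofReal_pos]; linarith)
    have hdiffsmall : ν (U \ C) < ENNReal.ofReal (ε/2) :=
      measure_diff_lt_of_lt_add hC.nullMeasurableSet hCU (measure_ne_top ν C) hνU
    -- per-measure bound
    have key : ∀ (t : S3), IsProbabilityMeasure (P t) →
        ((P t).map Prod.snd ≤ ν) →
        (P t (I s ×ˢ U)).toReal ≤ (P t (I s ×ˢ C)).toReal + ε/2 ∧
        (P t (I s ×ˢ C)).toReal ≤ (P t (I s ×ˢ U)).toReal := by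
      intro t ht hle
      haveI := ht
      constructor
      · have h1 : P t (I s ×ˢ U) ≤ P t (I s ×ˢ C) + P t (I s ×ˢ (U \ C)) := by
          refine (measure_mono ?_).trans (measure_union_le _ _)
          rintro ⟨x, y⟩ ⟨hx, hy⟩
          by_cases h : y ∈ C
          · exact Or.inl ⟨hx, h⟩
          · exact Or.inr ⟨hx, ⟨hy, h⟩⟩
        have h2 : P t (I s ×ˢ (U \ C)) ≤ ν (U \ C) := by
          have hm : MeasurableSet (U \ C) := hUopen.measurableSet.diff hC
          calc P t (I s ×ˢ (U \ C)) ≤ P t (Set.univ ×ˢ (U \ C)) :=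
                measure_mono (Set.prod_mono (Set.subset_univ _) subset_rfl)
            _ = (P t).map Prod.snd (U \ C) := (hmap t _ hm).symm
            _ ≤ ν (U \ C) := hle _
        have h3 : P t (I s ×ˢ (U \ C)) < ENNReal.ofReal (ε/2) := lt_of_le_of_lt h2 hdiffsmall
        have h4 : (P t (I s ×ˢ (U \ C))).toReal ≤ ε/2 := by
          have := ENNReal.toReal_mono ENNReal.ofReal_ne_top h3.le
          rwa [ENNReal.toReal_ofReal (by linarith)] at this
        have h5 : (P t (I s ×ˢ U)).toReal
            ≤ (P t (I s ×ˢ C)).toReal + (P t (I s ×ˢ (U \ C))).toReal := by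
          have := ENNReal.toReal_mono (a := P t (I s ×ˢ U))
            (ENNReal.add_ne_top.mpr ⟨measure_ne_top _ _, measure_ne_top _ _⟩) h1
          rwa [ENNReal.toReal_add (measure_ne_top _ _) (measure_ne_top _ _)] at this
        linarith
      · exact ENNReal.toReal_mono (measure_ne_top _ _)
          (measure_mono (Set.prod_mono subset_rfl hCU))
    have k1 := key (s3n n) (hPprob _) (by rw [hνdef]; exact Measure.le_add_right le_rfl)
    have k2 := key s3 (hPprob _) (by rw [hνdef]; exact Measure.le_add_left le_rfl)
    have hU := hDopen n s U hUopen
    have habs := abs_sub_abs_le_abs_sub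
      ((P (s3n n) (I s ×ˢ C)).toReal) ((P s3 (I s ×ˢ C)).toReal)
    rw [abs_le]
    constructor
    · have := neg_abs_le ((P (s3n n) (I s ×ˢ U)).toReal - (P s3 (I s ×ˢ U)).toReal)
      have hU' : -(D n s) ≤ (P (s3n n) (I s ×ˢ U)).toReal - (P s3 (I s ×ˢ U)).toReal := by
        have := abs_le.mp hU; linarith [this.1]
      obtain ⟨k1a, k1b⟩ := k1
      obtain ⟨k2a, k2b⟩ := k2
      linarith
    · have hU' : (P (s3n n) (I s ×ˢ U)).toReal - (P s3 (I s ×ˢ U)).toReal ≤ D n s :=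
        (abs_le.mp hU).2
      obtain ⟨k1a, k1b⟩ := k1
      obtain ⟨k2a, k2b⟩ := k2
      linarith
    -- marginal comparison
  have hmarg : ∀ (n : ℕ) (A : Set S2), MeasurableSet A →
      |((Pn' n) A).toReal - (P' A).toReal| ≤ D n ∅ := by
    intro n A hA
    have h := hDle n ∅ A hA
    rw [hIuniv] at h
    simp only [hPn'def, hP'def]
    rw [hmap _ _ hA, hmap _ _ hA]
    exact h
  -- measurability of densities
  have mH : ∀ (t : S3) (B : Set S1), MeasurableSet B → Measurable (fun s2 => H s2 t B) := by
    intro t B hB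
    have h1 : Measurable (fun s2 : S2 => (s2, t)) := measurable_id.prodMk measurable_const
    exact (Measure.measurable_coe hB).comp (hHm.comp h1)
  have mHr : ∀ (t : S3) (B : Set S1), MeasurableSet B →
      Measurable (fun s2 => (H s2 t B).toReal) := fun t B hB => (mH t B hB).ennreal_toReal
  have hH01 : ∀ (s2 : S2) (t : S3) (B : Set S1), (H s2 t B).toReal ≤ 1 := by
    intro s2 t B
    haveI := hHprob s2 t
    have := ENNReal.toReal_mono ENNReal.one_ne_top (prob_le_one (μ := H s2 t) (s := B))
    simpa using this
  have habs1 : ∀ (n : ℕ) (s : Finset ℕ) (x : S2),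
      |(H x (s3n n) (I s)).toReal - (H x s3 (I s)).toReal| ≤ 1 := by
    intro n s x
    have h1 := hH01 x (s3n n) (I s)
    have h2 := hH01 x s3 (I s)
    have h3 : (0:ℝ) ≤ (H x (s3n n) (I s)).toReal := ENNReal.toReal_nonneg
    have h4 : (0:ℝ) ≤ (H x s3 (I s)).toReal := ENNReal.toReal_nonneg
    rw [abs_le]; constructor <;> linarith
  have habsm : ∀ (n : ℕ) (s : Finset ℕ),
      Measurable (fun s2 => |(H s2 (s3n n) (I s)).toReal - (H s2 s3 (I s)).toReal|) :=
    fun n s => ((mHr (s3n n) _ (hImeas s)).sub (mHr s3 _ (hImeas s))).abs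
  have hint : ∀ (ρ : Measure S2) [IsFiniteMeasure ρ] (g : S2 → ℝ), Measurable g →
      (∀ x, |g x| ≤ 1) → Integrable g ρ := by
    intro ρ _ g hg hbnd
    refine Integrable.mono' (integrable_const 1) hg.aestronglyMeasurable ?_
    filter_upwards with x
    exact hbnd x
  -- set-integral identities
  have hsetint : ∀ (t : S3) (B : Set S1), MeasurableSet B → ∀ (ρ : Measure S2) (A : Set S2),
      ∫ s2 in A, (H s2 t B).toReal ∂ρ = (∫⁻ s2 in A, H s2 t B ∂ρ).toReal := by
    intro t B hB ρ A
    refine integral_toReal ((mH t B hB).aemeasurable) ?_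
    filter_upwards with s2
    haveI := hHprob s2 t
    exact measure_lt_top _ _
  have hkey : ∀ (n : ℕ) (s : Finset ℕ) (A : Set S2), MeasurableSet A →
      ∫ s2 in A, (H s2 (s3n n) (I s)).toReal ∂(Pn' n) = (P (s3n n) (I s ×ˢ A)).toReal := by
    intro n s A hA
    rw [hsetint _ _ (hImeas s) _ A, hdis (s3n n) (I s) A (hImeas s) hA]
  have hkey' : ∀ (s : Finset ℕ) (A : Set S2), MeasurableSet A →
      ∫ s2 in A, (H s2 s3 (I s)).toReal ∂P' = (P s3 (I s ×ˢ A)).toReal := by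
    intro s A hA
    rw [hsetint _ _ (hImeas s) _ A, hdis s3 (I s) A (hImeas s) hA]
  -- comparison of set integrals
  have hcmpA : ∀ (n : ℕ) (A : Set S2), MeasurableSet A → ∀ (f : S2 → ℝ), Measurable f →
      (∀ x, 0 ≤ f x) → (∀ x, f x ≤ 1) →
      (∫ x in A, f x ∂P' ≤ ∫ x in A, f x ∂(Pn' n) + D n ∅ ∧
       ∫ x in A, f x ∂(Pn' n) ≤ ∫ x in A, f x ∂P' + D n ∅) := by
    intro n A hA f hf h0 h1
    constructor
    · refine cmp_lemma _ _ f hf h0 h1 _ ?_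
      intro B hB
      rw [Measure.restrict_apply hB, Measure.restrict_apply hB]
      have h := abs_le.mp (hmarg n (B ∩ A) (hB.inter hA))
      linarith [h.1]
    · refine cmp_lemma _ _ f hf h0 h1 _ ?_
      intro B hB
      rw [Measure.restrict_apply hB, Measure.restrict_apply hB]
      have h := abs_le.mp (hmarg n (B ∩ A) (hB.inter hA))
      linarith [h.2]
  have hcmpU : ∀ (n : ℕ) (f : S2 → ℝ), Measurable f →
      (∀ x, 0 ≤ f x) → (∀ x, f x ≤ 1) →
      ∫ x, f x ∂P' ≤ ∫ x, f x ∂(Pn' n) + D n ∅ := by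
    intro n f hf h0 h1
    refine cmp_lemma _ _ f hf h0 h1 _ ?_
    intro B hB
    have h := abs_le.mp (hmarg n B hB)
    linarith [h.1]
  -- the L¹ distances
  set TD : ℕ → Finset ℕ → ℝ := fun n s =>
    ∫ s2, |(H s2 (s3n n) (I s)).toReal - (H s2 s3 (I s)).toReal| ∂P' with hTDdef
  have hTD0 : ∀ n s, 0 ≤ TD n s := fun n s => integral_nonneg (fun x => abs_nonneg _)
  have hTD : ∀ s, Tendsto (fun n => TD n s) atTop (𝓝 0) := by
    intro s
    have hub : ∀ n, TD n s ≤ 2 * D n s + 3 * D n ∅ := by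
      intro n
      set A : Set S2 :=
        {s2 | (H s2 s3 (I s)).toReal ≤ (H s2 (s3n n) (I s)).toReal} with hAdef
      have hA : MeasurableSet A :=
        measurableSet_le (mHr s3 _ (hImeas s)) (mHr (s3n n) _ (hImeas s))
      -- step 1 : pass from P' to Pn' n
      have step1 : TD n s ≤
          (∫ s2, |(H s2 (s3n n) (I s)).toReal - (H s2 s3 (I s)).toReal| ∂(Pn' n)) + D n ∅ :=
        hcmpU n _ (habsm n s) (fun x => abs_nonneg _) (habs1 n s)
      -- step 2 : split the integral
      have hintabs : Integrable
          (fun s2 => |(H s2 (s3n n) (I s)).toReal - (H s2 s3 (I s)).toReal|) (Pn' n) :=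
        hint _ _ (habsm n s) (fun x => by rw [abs_abs]; exact habs1 n s x)
      have step2 : ∫ s2, |(H s2 (s3n n) (I s)).toReal - (H s2 s3 (I s)).toReal| ∂(Pn' n)
          = (∫ s2 in A, ((H s2 (s3n n) (I s)).toReal - (H s2 s3 (I s)).toReal) ∂(Pn' n))
            + ∫ s2 in Aᶜ, ((H s2 s3 (I s)).toReal - (H s2 (s3n n) (I s)).toReal) ∂(Pn' n) := by
        rw [← integral_add_compl hA hintabs]
        congr 1
        · refine setIntegral_congr_fun hA (fun x hx => ?_)
          have : (H x s3 (I s)).toReal ≤ (H x (s3n n) (I s)).toReal := hx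
          rw [abs_of_nonneg (by linarith)]
        · refine setIntegral_congr_fun hA.compl (fun x hx => ?_)
          have : ¬ ((H x s3 (I s)).toReal ≤ (H x (s3n n) (I s)).toReal) := hx
          rw [abs_of_nonpos (by linarith), neg_sub]
      -- integrability of the densities
      have int1 : Integrable (fun s2 => (H s2 (s3n n) (I s)).toReal) (Pn' n) :=
        hint _ _ (mHr (s3n n) _ (hImeas s)) (fun x => by
          rw [abs_of_nonneg ENNReal.toReal_nonneg]; exact hH01 x _ _)
      have int2 : Integrable (fun s2 => (H s2 s3 (I s)).toReal) (Pn' n) :=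
        hint _ _ (mHr s3 _ (hImeas s)) (fun x => by
          rw [abs_of_nonneg ENNReal.toReal_nonneg]; exact hH01 x _ _)
      -- bound on A
      have boundA : ∫ s2 in A, ((H s2 (s3n n) (I s)).toReal - (H s2 s3 (I s)).toReal) ∂(Pn' n)
          ≤ D n s + D n ∅ := by
        rw [integral_sub (int1.restrict) (int2.restrict)]
        have e1 : ∫ s2 in A, (H s2 (s3n n) (I s)).toReal ∂(Pn' n)
            = (P (s3n n) (I s ×ˢ A)).toReal := hkey n s A hA
        have e2 : ∫ s2 in A, (H s2 s3 (I s)).toReal ∂P'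
            = (P s3 (I s ×ˢ A)).toReal := hkey' s A hA
        have e3 : ∫ s2 in A, (H s2 s3 (I s)).toReal ∂P'
            ≤ (∫ s2 in A, (H s2 s3 (I s)).toReal ∂(Pn' n)) + D n ∅ :=
          (hcmpA n A hA _ (mHr s3 _ (hImeas s)) (fun x => ENNReal.toReal_nonneg)
            (fun x => hH01 x _ _)).1
        have e4 := (abs_le.mp (hDle n s A hA)).2
        linarith
      -- bound on Aᶜ
      have boundAc : ∫ s2 in Aᶜ, ((H s2 s3 (I s)).toReal - (H s2 (s3n n) (I s)).toReal) ∂(Pn' n)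
          ≤ D n s + D n ∅ := by
        rw [integral_sub (int2.restrict) (int1.restrict)]
        have e1 : ∫ s2 in Aᶜ, (H s2 (s3n n) (I s)).toReal ∂(Pn' n)
            = (P (s3n n) (I s ×ˢ Aᶜ)).toReal := hkey n s Aᶜ hA.compl
        have e2 : ∫ s2 in Aᶜ, (H s2 s3 (I s)).toReal ∂P'
            = (P s3 (I s ×ˢ Aᶜ)).toReal := hkey' s Aᶜ hA.compl
        have e3 : ∫ s2 in Aᶜ, (H s2 s3 (I s)).toReal ∂(Pn' n)
            ≤ (∫ s2 in Aᶜ, (H s2 s3 (I s)).toReal ∂P') + D n ∅ :=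
          (hcmpA n Aᶜ hA.compl _ (mHr s3 _ (hImeas s)) (fun x => ENNReal.toReal_nonneg)
            (fun x => hH01 x _ _)).2
        have e4 := (abs_le.mp (hDle n s Aᶜ hA.compl)).1
        linarith
      have := step1
      rw [step2] at this
      linarith
    have hlim : Tendsto (fun n => 2 * D n s + 3 * D n ∅) atTop (𝓝 0) := by
      have h := ((hD s).const_mul 2).add ((hD ∅).const_mul 3)
      simpa using h
    exact squeeze_zero (fun n => hTD0 n s) hub hlim
  -- extraction of the subsequence
  obtain ⟨σ, hσ⟩ := exists_surjective_nat (Finset ℕ)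
  have hev : ∀ m : ℕ, ∀ᶠ k in atTop, ∀ i ∈ Set.Iic m, TD k (σ i) < (1/2:ℝ)^m := by
    intro m
    refine (eventually_all_finite (Set.finite_Iic m)).mpr (fun i _ => ?_)
    exact (hTD (σ i)).eventually_lt_const (by positivity)
  obtain ⟨φ, hφmono, hφ⟩ := Filter.extraction_forall_of_eventually hev
  -- a.e. convergence along the subsequence, for each finite intersection
  have hae : ∀ s : Finset ℕ, ∀ᵐ s2 ∂P', Tendsto (fun k => (H s2 (s3n (φ k)) (I s)).toReal)
      atTop (𝓝 ((H s2 s3 (I s)).toReal)) := by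
    intro s
    obtain ⟨i, rfl⟩ := hσ s
    have hsumm : Summable (fun k => TD (φ k) (σ i)) := by
      refine (summable_nat_add_iff i).mp ?_
      have hgeo : Summable (fun k : ℕ => (1/2:ℝ)^(k+i)) := by
        simp_rw [pow_add]
        exact (summable_geometric_of_lt_one (by norm_num) (by norm_num)).mul_right _
      exact Summable.of_nonneg_of_le (fun k => hTD0 _ _)
        (fun k => (hφ (k + i) i (by simp)).le) hgeo
    have h := ae_tendsto_of_summable_integral P'
      (fun k s2 => |(H s2 (s3n (φ k)) (I (σ i))).toReal - (H s2 s3 (I (σ i))).toReal|)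
      (fun k => habsm (φ k) (σ i)) (fun k x => abs_nonneg _)
      (fun k => hint _ _ (habsm (φ k) (σ i))
        (fun x => by rw [abs_abs]; exact habs1 (φ k) (σ i) x)) hsumm
    filter_upwards [h] with s2 hs2
    rw [tendsto_iff_dist_tendsto_zero]
    simpa [Real.dist_eq] using hs2
  -- the full-measure measurable set
  set Tset : Finset ℕ → Set S2 := fun s =>
    {s2 | Tendsto (fun k => (H s2 (s3n (φ k)) (I s)).toReal) atTop
      (𝓝 ((H s2 s3 (I s)).toReal))} with hTsetdef
  set M : Finset ℕ → Set S2 := fun s => (toMeasurable P' (Tset s)ᶜ)ᶜ with hMdef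
  have hMmeas : ∀ s, MeasurableSet (M s) := fun s => (measurableSet_toMeasurable _ _).compl
  have hMsub : ∀ s, M s ⊆ Tset s := by
    intro s
    have h1 : (Tset s)ᶜ ⊆ toMeasurable P' (Tset s)ᶜ := subset_toMeasurable _ _
    have := Set.compl_subset_compl.mpr h1
    rwa [compl_compl] at this
  have hMnull : ∀ s, P' (M s)ᶜ = 0 := by
    intro s
    simp only [hMdef, compl_compl]
    rw [measure_toMeasurable]
    have h := hae s
    rw [ae_iff] at h
    exact h
  set Cs : Set S2 := ⋂ i : ℕ, M (σ i) with hCsdef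
  have hCsmeas : MeasurableSet Cs := MeasurableSet.iInter (fun i => hMmeas _)
  have hCs1 : P' Cs = 1 := by
    have hnull : P' Csᶜ = 0 := by
      rw [hCsdef, Set.compl_iInter]
      exact measure_iUnion_null (fun i => hMnull (σ i))
    exact (prob_compl_eq_zero_iff hCsmeas).mp hnull
  refine ⟨φ, hφmono, Cs, hCsmeas, hCs1, ?_⟩
  intro s2 hs2 f
  have hconv : ∀ s : Finset ℕ, Tendsto (fun k => ((H s2 (s3n (φ k))) (⋂ j ∈ s, e j)).toReal)
      atTop (𝓝 ((H s2 s3 (⋂ j ∈ s, e j)).toReal)) := by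
    intro s
    obtain ⟨i, rfl⟩ := hσ s
    exact hMsub (σ i) (Set.mem_iInter.mp hs2 i)
  have hbasis : ∀ G : Set S1, IsOpen G → ∀ x ∈ G, ∃ j, x ∈ e j ∧ e j ⊆ G := by
    intro G hG x hx
    obtain ⟨v, hvmem, hxv, hvG⟩ := hb.exists_subset_of_mem_open hx hG
    rw [he_range] at hvmem
    obtain ⟨j, rfl⟩ := hvmem
    exact ⟨j, hxv, hvG⟩
  exact weak_conv_of_basis (H s2 s3) (fun k => H s2 (s3n (φ k))) (hHprob s2 s3)
    (fun k => hHprob _ _) e he_open hbasis hconv f
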